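/- arXiv:2407.14223 — 2 statements merged into one kernel-verified Lean document; each statement's English description precedes it below -/
import Mathlib

section
/- If f : ℝ → ℂ satisfies (1+|x|) f(x) ∈ L²((0,∞)), then the function x ↦ ∫_x^∞ |f(y)| dy belongs to L²((0,∞)), with L² norm bounded by a constant times ‖(1+|·|) f‖_{L²((0,∞))}. -/
open MeasureTheory Set

open scoped ENNReal

private lemma stepA (H : ℝ → ℝ≥0∞) (hH : Measurable H) {x : ℝ} (hx : 0 < x) :
    (∫⁻ y in Ioi x, H y) ^ (2:ℝ) ≤
      (∫⁻ y in Ioi x, H y ^ (2:ℝ) * ENNReal.ofReal y ^ ((3:ℝ)/2)) *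
        ENNReal.ofReal (2 * x ^ (-(1:ℝ)/2)) := by
  set f : ℝ → ℝ≥0∞ := fun y => H y * ENNReal.ofReal y ^ ((3:ℝ)/4) with hf
  set g : ℝ → ℝ≥0∞ := fun y => ENNReal.ofReal y ^ (-(3:ℝ)/4) with hg
  have h1 : ∫⁻ y in Ioi x, H y = ∫⁻ y in Ioi x, (f * g) y := by
    refine setLIntegral_congr_fun measurableSet_Ioi (fun y hy => ?_)
    have hy0 : (0:ℝ) < y := hx.trans hy
    simp only [f, g, Pi.mul_apply]
    rw [mul_assoc, ← ENNReal.rpow_add _ _ (by simpa using hy0) ENNReal.ofReal_ne_top]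
    norm_num
  have hCS := ENNReal.lintegral_mul_le_Lp_mul_Lq (volume.restrict (Ioi x))
    (Real.HolderConjugate.two_two : Real.HolderConjugate 2 2)
    (f := f) (g := g) (by fun_prop) (by fun_prop)
  rw [h1]
  calc (∫⁻ y in Ioi x, (f*g) y) ^ (2:ℝ)
      ≤ ((∫⁻ y in Ioi x, f y ^ (2:ℝ)) ^ (1/(2:ℝ)) * (∫⁻ y in Ioi x, g y ^ (2:ℝ)) ^ (1/(2:ℝ))) ^ (2:ℝ) :=
        ENNReal.rpow_le_rpow hCS (by norm_num)
    _ = (∫⁻ y in Ioi x, f y ^ (2:ℝ)) * (∫⁻ y in Ioi x, g y ^ (2:ℝ)) := by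
        rw [ENNReal.mul_rpow_of_nonneg _ _ (by norm_num), ← ENNReal.rpow_mul, ← ENNReal.rpow_mul]
        norm_num
    _ = (∫⁻ y in Ioi x, H y ^ (2:ℝ) * ENNReal.ofReal y ^ ((3:ℝ)/2)) *
          ENNReal.ofReal (2 * x ^ (-(1:ℝ)/2)) := by
        congr 1
        · refine setLIntegral_congr_fun measurableSet_Ioi (fun y hy => ?_)
          simp only [f]
          rw [ENNReal.mul_rpow_of_nonneg _ _ (by norm_num), ← ENNReal.rpow_mul]
          norm_num
        · have h2 : ∫⁻ y in Ioi x, g y ^ (2:ℝ) = ∫⁻ y in Ioi x, ENNReal.ofReal (y ^ (-(3:ℝ)/2)) := by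
            refine setLIntegral_congr_fun measurableSet_Ioi (fun y hy => ?_)
            simp only [g]
            rw [← ENNReal.rpow_mul, ← ENNReal.ofReal_rpow_of_pos (hx.trans hy)]
            norm_num
          rw [h2, ← ofReal_integral_eq_lintegral_ofReal
            (integrableOn_Ioi_rpow_of_lt (by norm_num) hx)
            (ae_restrict_of_forall_mem measurableSet_Ioi fun y hy =>
              Real.rpow_nonneg (hx.trans hy).le _)]
          rw [integral_Ioi_rpow_of_lt (by norm_num) hx]
          congr 1
          rw [show (-(3:ℝ)/2 + 1) = -(1:ℝ)/2 by norm_num]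
          ring

private lemma hardy_key (H : ℝ → ℝ≥0∞) (hH : Measurable H) :
    ∫⁻ x in Ioi (0:ℝ), (∫⁻ y in Ioi x, H y) ^ (2:ℝ)
      ≤ 4 * ∫⁻ y in Ioi (0:ℝ), ENNReal.ofReal y ^ (2:ℝ) * H y ^ (2:ℝ) := by
  set F : ℝ → ℝ≥0∞ := fun y => H y ^ (2:ℝ) * ENNReal.ofReal y ^ ((3:ℝ)/2) with hF
  set c : ℝ → ℝ≥0∞ := fun x => ENNReal.ofReal (2 * x ^ (-(1:ℝ)/2)) with hc
  have hFm : Measurable F := by fun_prop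
  have hcm : Measurable c := by fun_prop
  set Φ : ℝ × ℝ → ℝ≥0∞ := fun p => {q : ℝ × ℝ | q.1 < q.2}.indicator (fun q => F q.2 * c q.1) p
    with hΦ
  have hΦm : Measurable Φ :=
    ((hFm.comp measurable_snd).mul (hcm.comp measurable_fst)).indicator
      (measurableSet_lt measurable_fst measurable_snd)
  have step1 : ∫⁻ x in Ioi (0:ℝ), (∫⁻ y in Ioi x, H y) ^ (2:ℝ)
      ≤ ∫⁻ x in Ioi (0:ℝ), ∫⁻ y in Ioi (0:ℝ), Φ (x, y) := by
    refine setLIntegral_mono' measurableSet_Ioi fun x hx => ?_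
    have hx : (0:ℝ) < x := hx
    have heq : ∫⁻ y in Ioi (0:ℝ), Φ (x, y) = (∫⁻ y in Ioi x, F y) * c x := by
      have : ∀ y : ℝ, Φ (x, y) = (Ioi x).indicator (fun y => F y * c x) y := by
        intro y
        simp only [Φ, indicator_apply, mem_setOf_eq, mem_Ioi]
      simp_rw [this]
      rw [lintegral_indicator measurableSet_Ioi, Measure.restrict_restrict measurableSet_Ioi,
        inter_eq_self_of_subset_left (Ioi_subset_Ioi hx.le),
        lintegral_mul_const _ hFm]
    rw [heq]
    exact stepA H hH hx
  have step2 : ∫⁻ x in Ioi (0:ℝ), ∫⁻ y in Ioi (0:ℝ), Φ (x, y)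
      = ∫⁻ y in Ioi (0:ℝ), ∫⁻ x in Ioi (0:ℝ), Φ (x, y) :=
    lintegral_lintegral_swap (hΦm.aemeasurable)
  have step3 : ∫⁻ y in Ioi (0:ℝ), ∫⁻ x in Ioi (0:ℝ), Φ (x, y)
      ≤ ∫⁻ y in Ioi (0:ℝ), 4 * (ENNReal.ofReal y ^ (2:ℝ) * H y ^ (2:ℝ)) := by
    refine setLIntegral_mono' measurableSet_Ioi fun y hy => ?_
    have hy : (0:ℝ) < y := hy
    have heq : ∫⁻ x in Ioi (0:ℝ), Φ (x, y) = F y * ∫⁻ x in Ioo 0 y, c x := by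
      have : ∀ x : ℝ, Φ (x, y) = (Iio y).indicator (fun x => F y * c x) x := by
        intro x
        simp only [Φ, indicator_apply, mem_setOf_eq, mem_Iio]
      simp_rw [this]
      rw [lintegral_indicator measurableSet_Iio, Measure.restrict_restrict measurableSet_Iio,
        show Iio y ∩ Ioi (0:ℝ) = Ioo 0 y from by ext z; simp [mem_Ioo, and_comm],
        lintegral_const_mul _ hcm]
    rw [heq]
    have hint : IntegrableOn (fun x : ℝ => 2 * x ^ (-(1:ℝ)/2)) (Ioo 0 y) := by
      have : IntervalIntegrable (fun x : ℝ => x ^ (-(1:ℝ)/2)) volume 0 y :=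
        intervalIntegral.intervalIntegrable_rpow' (by norm_num)
      exact ((this.const_mul 2).1).mono_set Ioo_subset_Ioc_self
    have hval : ∫⁻ x in Ioo 0 y, c x = ENNReal.ofReal (4 * y ^ ((1:ℝ)/2)) := by
      simp only [c]
      rw [← ofReal_integral_eq_lintegral_ofReal hint
        (ae_restrict_of_forall_mem measurableSet_Ioo fun x hx =>
          mul_nonneg (by norm_num) (Real.rpow_nonneg hx.1.le _))]
      congr 1
      rw [← integral_Ioc_eq_integral_Ioo, ← intervalIntegral.integral_of_le hy.le,
        intervalIntegral.integral_const_mul, integral_rpow (Or.inl (by norm_num)),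
        Real.zero_rpow (by norm_num)]
      norm_num
      ring
    rw [hval]
    have : ENNReal.ofReal (4 * y ^ ((1:ℝ)/2)) = 4 * ENNReal.ofReal y ^ ((1:ℝ)/2) := by
      rw [ENNReal.ofReal_mul (by norm_num), ← ENNReal.ofReal_rpow_of_pos hy]
      norm_num
    rw [this, hF]
    refine le_of_eq ?_
    calc H y ^ (2:ℝ) * ENNReal.ofReal y ^ ((3:ℝ)/2) * (4 * ENNReal.ofReal y ^ ((1:ℝ)/2))
        = 4 * ((ENNReal.ofReal y ^ ((3:ℝ)/2) * ENNReal.ofReal y ^ ((1:ℝ)/2)) * H y ^ (2:ℝ)) := by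
          ring
      _ = 4 * (ENNReal.ofReal y ^ (2:ℝ) * H y ^ (2:ℝ)) := by
          rw [← ENNReal.rpow_add _ _ (by simpa using hy) ENNReal.ofReal_ne_top]
          norm_num
  calc ∫⁻ x in Ioi (0:ℝ), (∫⁻ y in Ioi x, H y) ^ (2:ℝ)
      ≤ ∫⁻ y in Ioi (0:ℝ), 4 * (ENNReal.ofReal y ^ (2:ℝ) * H y ^ (2:ℝ)) :=
        step1.trans (step2.le.trans step3)
    _ = 4 * ∫⁻ y in Ioi (0:ℝ), ENNReal.ofReal y ^ (2:ℝ) * H y ^ (2:ℝ) := by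
        rw [lintegral_const_mul _ (by fun_prop)]

theorem stmt_1 :
    ∃ C > 0, ∀ f : ℝ → ℂ,
      MemLp (fun x => (1 + |x|) • f x) 2 (volume.restrict (Ioi (0:ℝ))) →
      MemLp (fun x => ∫ y in Ioi x, ‖f y‖) 2 (volume.restrict (Ioi (0:ℝ))) ∧
      eLpNorm (fun x => ∫ y in Ioi x, ‖f y‖) 2 (volume.restrict (Ioi (0:ℝ)))
        ≤ ENNReal.ofReal C *
          eLpNorm (fun x => (1 + |x|) • f x) 2 (volume.restrict (Ioi (0:ℝ))) := by
  refine ⟨2, two_pos, fun f hf => ?_⟩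
  have hφ := hf.aestronglyMeasurable
  have hfm : AEStronglyMeasurable f (volume.restrict (Ioi (0:ℝ))) := by
    have hc : Continuous fun x : ℝ => (1 + |x|)⁻¹ :=
      ((continuous_const.add continuous_abs).inv₀ (fun x => (by positivity : (0:ℝ) < 1 + |x|).ne'))
    have := (hc.aestronglyMeasurable (μ := volume.restrict (Ioi (0:ℝ)))).smul hφ
    refine this.congr (Filter.Eventually.of_forall fun x => ?_)
    simp only [Pi.smul_apply', smul_smul]
    rw [inv_mul_cancel₀ (by positivity), one_smul]
  have hn : AEMeasurable (fun y => (‖f y‖₊ : ℝ≥0∞)) (volume.restrict (Ioi (0:ℝ))) :=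
    hfm.enorm
  set H : ℝ → ℝ≥0∞ := hn.mk _ with hHdef
  have hHm : Measurable H := hn.measurable_mk
  have hHae : (fun y => (‖f y‖₊ : ℝ≥0∞)) =ᵐ[volume.restrict (Ioi (0:ℝ))] H := hn.ae_eq_mk
  set G : ℝ → ℝ := fun x => (∫⁻ y in Ioi x, H y).toReal with hGdef
  have hGanti : Antitone fun x : ℝ => ∫⁻ y in Ioi x, H y :=
    fun a b hab => lintegral_mono_set (Ioi_subset_Ioi hab)
  have hGm : Measurable G := ENNReal.measurable_toReal.comp hGanti.measurable
  have hres : ∀ x : ℝ, 0 < x →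
      (volume.restrict (Ioi (0:ℝ))).restrict (Ioi x) = volume.restrict (Ioi x) := by
    intro x hx
    rw [Measure.restrict_restrict measurableSet_Ioi,
      inter_eq_self_of_subset_left (Ioi_subset_Ioi hx.le)]
  have hgG : ∀ x ∈ Ioi (0:ℝ), (∫ y in Ioi x, ‖f y‖) = G x := by
    intro x hx
    have hmx : AEStronglyMeasurable (fun y => ‖f y‖) (volume.restrict (Ioi x)) := by
      rw [← hres x hx]; exact hfm.restrict.norm
    rw [integral_eq_lintegral_of_nonneg_ae (Filter.Eventually.of_forall fun y => norm_nonneg _)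
      hmx, hGdef]
    congr 1
    rw [← hres x hx]
    refine lintegral_congr_ae ?_
    have h1 : (fun y => ENNReal.ofReal ‖f y‖) = fun y => (‖f y‖₊ : ℝ≥0∞) := by
      funext y; exact ofReal_norm_eq_enorm _
    rw [h1]
    exact hHae.restrict
  have hgGae : (fun x => ∫ y in Ioi x, ‖f y‖) =ᵐ[volume.restrict (Ioi (0:ℝ))] G :=
    (ae_restrict_iff' measurableSet_Ioi).2 (Filter.Eventually.of_forall hgG)
  have hsm : AEStronglyMeasurable (fun x => ∫ y in Ioi x, ‖f y‖)
      (volume.restrict (Ioi (0:ℝ))) := hGm.aestronglyMeasurable.congr hgGae.symm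
  -- main bound
  have hchain : ∫⁻ x in Ioi (0:ℝ), (‖G x‖₊ : ℝ≥0∞) ^ (2:ℝ)
      ≤ 4 * ∫⁻ x in Ioi (0:ℝ), (‖(1 + |x|) • f x‖₊ : ℝ≥0∞) ^ (2:ℝ) := by
    have h1 : ∫⁻ x in Ioi (0:ℝ), (‖G x‖₊ : ℝ≥0∞) ^ (2:ℝ)
        ≤ ∫⁻ x in Ioi (0:ℝ), (∫⁻ y in Ioi x, H y) ^ (2:ℝ) := by
      refine lintegral_mono fun x => ?_
      refine ENNReal.rpow_le_rpow ?_ (by norm_num)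
      rw [hGdef, ← enorm_eq_nnnorm, Real.enorm_eq_ofReal ENNReal.toReal_nonneg]
      exact ENNReal.ofReal_toReal_le
    have h2 : ∫⁻ y in Ioi (0:ℝ), ENNReal.ofReal y ^ (2:ℝ) * H y ^ (2:ℝ)
        ≤ ∫⁻ x in Ioi (0:ℝ), (‖(1 + |x|) • f x‖₊ : ℝ≥0∞) ^ (2:ℝ) := by
      refine lintegral_mono_ae ?_
      filter_upwards [hHae, ae_restrict_mem measurableSet_Ioi] with x hx hx0
      rw [← hx]
      have hx1 : (0:ℝ) ≤ 1 + |x| := by positivity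
      have : ((‖(1 + |x|) • f x‖₊ : ℝ≥0∞)) = ENNReal.ofReal (1 + |x|) * (‖f x‖₊ : ℝ≥0∞) := by
        rw [nnnorm_smul, ENNReal.coe_mul, ← enorm_eq_nnnorm, Real.enorm_eq_ofReal hx1]
      rw [this, ENNReal.mul_rpow_of_nonneg _ _ (by norm_num)]
      gcongr
      exact (le_abs_self x).trans (by linarith [abs_nonneg x])
    calc ∫⁻ x in Ioi (0:ℝ), (‖G x‖₊ : ℝ≥0∞) ^ (2:ℝ)
        ≤ ∫⁻ x in Ioi (0:ℝ), (∫⁻ y in Ioi x, H y) ^ (2:ℝ) := h1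
      _ ≤ 4 * ∫⁻ y in Ioi (0:ℝ), ENNReal.ofReal y ^ (2:ℝ) * H y ^ (2:ℝ) := hardy_key H hHm
      _ ≤ 4 * ∫⁻ x in Ioi (0:ℝ), (‖(1 + |x|) • f x‖₊ : ℝ≥0∞) ^ (2:ℝ) := by gcongr
  have hbound : eLpNorm (fun x => ∫ y in Ioi x, ‖f y‖) 2 (volume.restrict (Ioi (0:ℝ)))
      ≤ ENNReal.ofReal 2 *
        eLpNorm (fun x => (1 + |x|) • f x) 2 (volume.restrict (Ioi (0:ℝ))) := by
    rw [eLpNorm_congr_ae hgGae,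
      eLpNorm_eq_lintegral_rpow_enorm_toReal two_ne_zero ENNReal.ofNat_ne_top,
      eLpNorm_eq_lintegral_rpow_enorm_toReal two_ne_zero ENNReal.ofNat_ne_top]
    simp only [ENNReal.toReal_ofNat]
    calc (∫⁻ x in Ioi (0:ℝ), (‖G x‖₊ : ℝ≥0∞) ^ (2:ℝ)) ^ (1/(2:ℝ))
        ≤ (4 * ∫⁻ x in Ioi (0:ℝ), (‖(1 + |x|) • f x‖₊ : ℝ≥0∞) ^ (2:ℝ)) ^ (1/(2:ℝ)) :=
          ENNReal.rpow_le_rpow hchain (by norm_num)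
      _ = ENNReal.ofReal 2 *
            (∫⁻ x in Ioi (0:ℝ), (‖(1 + |x|) • f x‖₊ : ℝ≥0∞) ^ (2:ℝ)) ^ (1/(2:ℝ)) := by
          rw [ENNReal.mul_rpow_of_nonneg _ _ (by norm_num)]
          congr 1
          rw [show (4:ℝ≥0∞) = ENNReal.ofReal 4 by norm_num,
            ENNReal.ofReal_rpow_of_pos (by norm_num)]
          rw [show ((4:ℝ) ^ (1/(2:ℝ))) = 2 by
            rw [show (4:ℝ) = 2 ^ (2:ℕ) by norm_num, ← Real.rpow_natCast 2 2,
              ← Real.rpow_mul (by norm_num)]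
            norm_num]
  refine ⟨⟨hsm, ?_⟩, hbound⟩
  exact lt_of_le_of_lt hbound (ENNReal.mul_lt_top ENNReal.ofReal_lt_top hf.2)
end

section
/- Let g : ℝ → ℂ be measurable and define f(z) = g(z - 1/z) for z ∈ (0,∞). Then ∫_0^∞ |f(z)|² dz = ∫_ℝ |g(γ)|² (1/2 + γ/(2√(γ²+4))) dγ; in particular ∫_0^∞ |f(z)|² dz ≤ ∫_ℝ |g(γ)|² dγ. -/
open MeasureTheory Set
open scoped ENNReal NNReal

noncomputable def phi (γ : ℝ) : ℝ := (γ + Real.sqrt (γ^2 + 4)) / 2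

lemma sqrt_pos' (γ : ℝ) : 0 < Real.sqrt (γ^2 + 4) :=
  Real.sqrt_pos.mpr (by positivity)

lemma abs_lt_sqrt (γ : ℝ) : |γ| < Real.sqrt (γ^2 + 4) := by
  have : |γ| = Real.sqrt (γ^2) := by rw [Real.sqrt_sq_eq_abs]
  rw [this]
  exact Real.sqrt_lt_sqrt (by positivity) (by linarith)

lemma phi_pos (γ : ℝ) : 0 < phi γ := by
  have h := abs_lt_sqrt γ
  have := neg_abs_le γ
  unfold phi; linarith

lemma phi_eq (γ : ℝ) : phi γ - 1 / phi γ = γ := by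
  have hr : Real.sqrt (γ^2 + 4) ^ 2 = γ^2 + 4 := Real.sq_sqrt (by positivity)
  have hp := phi_pos γ
  have h1 : 1 / phi γ = (Real.sqrt (γ^2 + 4) - γ) / 2 := by
    rw [div_eq_div_iff hp.ne' two_ne_zero]
    unfold phi
    nlinarith [hr]
  rw [h1]
  unfold phi
  ring

lemma phi_image : phi '' univ = Ioi (0:ℝ) := by
  ext z
  simp only [image_univ, mem_range, mem_Ioi]
  constructor
  · rintro ⟨γ, rfl⟩; exact phi_pos γ
  · intro hz
    refine ⟨z - 1/z, ?_⟩
    have hs : Real.sqrt ((z - 1/z)^2 + 4) = z + 1/z := by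
      rw [show (z - 1/z)^2 + 4 = (z + 1/z)^2 by field_simp; ring]
      exact Real.sqrt_sq (by positivity)
    unfold phi
    rw [hs]; field_simp; ring

lemma phi_inj : Function.Injective phi := by
  intro a b h
  have := phi_eq a
  rw [h, phi_eq b] at this
  exact this.symm

lemma phi_deriv (γ : ℝ) :
    HasDerivAt phi (1/2 + γ / (2 * Real.sqrt (γ^2 + 4))) γ := by
  have h1 : HasDerivAt (fun γ : ℝ => γ^2 + 4) (2 * γ) γ := by
    simpa using ((hasDerivAt_pow 2 γ).add_const 4)
  have h2 : HasDerivAt (fun γ : ℝ => Real.sqrt (γ^2 + 4))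
      (2 * γ / (2 * Real.sqrt (γ^2 + 4))) γ :=
    h1.sqrt (by positivity)
  have h3 := ((hasDerivAt_id γ).add h2).div_const 2
  refine h3.congr_deriv ?_
  have hs := (sqrt_pos' γ).ne'
  field_simp

lemma deriv_nonneg (γ : ℝ) : 0 ≤ 1/2 + γ / (2 * Real.sqrt (γ^2 + 4)) := by
  have h := abs_lt_sqrt γ
  have hs := sqrt_pos' γ
  have h0 : -Real.sqrt (γ^2+4) ≤ γ := by have := neg_abs_le γ; linarith
  have h2 : -Real.sqrt (γ^2+4) / (2 * Real.sqrt (γ^2+4)) ≤ γ / (2 * Real.sqrt (γ^2+4)) :=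
    div_le_div_of_nonneg_right h0 (by positivity)
  have heq : -Real.sqrt (γ^2+4) / (2 * Real.sqrt (γ^2+4)) = -(1/2) := by
    rw [div_eq_iff (by positivity : (2 * Real.sqrt (γ^2+4)) ≠ 0)]; ring
  rw [heq] at h2
  linarith

lemma deriv_le_one (γ : ℝ) : 1/2 + γ / (2 * Real.sqrt (γ^2 + 4)) ≤ 1 := by
  have h := abs_lt_sqrt γ
  have hs := sqrt_pos' γ
  have h1 : γ ≤ Real.sqrt (γ^2+4) := le_of_lt (lt_of_le_of_lt (le_abs_self γ) h)
  have : γ / (2 * Real.sqrt (γ^2+4)) ≤ Real.sqrt (γ^2+4) / (2 * Real.sqrt (γ^2+4)) :=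
    div_le_div_of_nonneg_right h1 (by positivity)
  have heq : Real.sqrt (γ^2+4) / (2 * Real.sqrt (γ^2+4)) = 1/2 := by
    rw [div_eq_iff (by positivity : (2 * Real.sqrt (γ^2+4)) ≠ 0)]; ring
  rw [heq] at this
  linarith

/-- Change of variables `γ = z - 1/z` on `(0,∞)`:
`∫_0^∞ |g(z-1/z)|² dz = ∫_ℝ |g(γ)|² (1/2 + γ/(2√(γ²+4))) dγ ≤ ∫_ℝ |g(γ)|² dγ`. -/
theorem stmt_5 (g : ℝ → ℂ) (hg : Measurable g) (f : ℝ → ℂ)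
    (hf : ∀ z : ℝ, f z = g (z - 1/z)) :
    (∫⁻ z in Ioi (0:ℝ), (‖f z‖₊ : ℝ≥0∞) ^ 2) =
      (∫⁻ γ : ℝ, (‖g γ‖₊ : ℝ≥0∞) ^ 2 *
        ENNReal.ofReal (1/2 + γ / (2 * Real.sqrt (γ^2 + 4)))) ∧
    (∫⁻ z in Ioi (0:ℝ), (‖f z‖₊ : ℝ≥0∞) ^ 2) ≤ ∫⁻ γ : ℝ, (‖g γ‖₊ : ℝ≥0∞) ^ 2 := by
  have key : (∫⁻ z in Ioi (0:ℝ), (‖f z‖₊ : ℝ≥0∞) ^ 2) =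
      ∫⁻ γ : ℝ, (‖g γ‖₊ : ℝ≥0∞) ^ 2 *
        ENNReal.ofReal (1/2 + γ / (2 * Real.sqrt (γ^2 + 4))) := by
    rw [← phi_image]
    have := lintegral_image_eq_lintegral_abs_det_fderiv_mul volume MeasurableSet.univ
      (f := phi)
      (f' := fun γ => (1 : ℝ →L[ℝ] ℝ).smulRight (1/2 + γ / (2 * Real.sqrt (γ^2 + 4))))
      (fun x _ => ((phi_deriv x).hasFDerivAt).hasFDerivWithinAt)
      (phi_inj.injOn) (fun z => (‖f z‖₊ : ℝ≥0∞) ^ 2)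
    rw [Measure.restrict_univ] at this
    rw [this]
    congr 1
    ext γ
    rw [ContinuousLinearMap.smulRight_one_eq_toSpanSingleton, ContinuousLinearMap.det_toSpanSingleton, abs_of_nonneg (deriv_nonneg γ), hf (phi γ), phi_eq γ, mul_comm]
  refine ⟨key, key ▸ lintegral_mono fun γ => ?_⟩
  calc (‖g γ‖₊ : ℝ≥0∞) ^ 2 * ENNReal.ofReal (1/2 + γ / (2 * Real.sqrt (γ^2 + 4)))
      ≤ (‖g γ‖₊ : ℝ≥0∞) ^ 2 * 1 :=
        mul_le_mul_right (ENNReal.ofReal_le_one.mpr (deriv_le_one γ)) _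
    _ = (‖g γ‖₊ : ℝ≥0∞) ^ 2 := mul_one _
end
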